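/- arXiv:2101.05376 — 3 statements merged into one kernel-verified Lean document; each statement's English description precedes it below -/
import Mathlib

section
/- Let R be a ring. Every proper two-sided ideal I of R is the intersection of all the completely irreducible two-sided ideals of R that contain I. -/
/-- A proper two-sided ideal `I` of a ring `R` is *completely irreducible* if `I` is not the
intersection of any family of two-sided ideals of `R` each of which properly contains `I`. -/
def TwoSidedIdeal.CompletelyIrreducible {R : Type*} [Ring R] (I : TwoSidedIdeal R) : Prop :=
  I ≠ ⊤ ∧ ∀ S : Set (TwoSidedIdeal R), (∀ J ∈ S, I < J) → I ≠ sInf S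

lemma exists_ci {R : Type*} [Ring R] (I : TwoSidedIdeal R) {x : R} (hx : x ∉ I) :
    ∃ M : TwoSidedIdeal R, M.CompletelyIrreducible ∧ I ≤ M ∧ x ∉ M := by
  set s : Set (TwoSidedIdeal R) := {J | I ≤ J ∧ x ∉ J} with hs
  have hIs : I ∈ s := ⟨le_refl I, hx⟩
  obtain ⟨M, -, hMs, hmax⟩ := zorn_le_nonempty₀ s (fun c hcs hc J hJ => by
    classical
    refine ⟨TwoSidedIdeal.mk' (⋃ K ∈ c, (K : Set R)) ?_ ?_ ?_ ?_ ?_, ⟨?_, ?_⟩, ?_⟩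
    · exact Set.mem_biUnion hJ (TwoSidedIdeal.zero_mem J)
    · rintro a b ha hb
      simp only [Set.mem_iUnion] at ha hb ⊢
      obtain ⟨K1, hK1, ha⟩ := ha
      obtain ⟨K2, hK2, hb⟩ := hb
      rcases hc.total hK1 hK2 with h | h
      · exact ⟨K2, hK2, TwoSidedIdeal.add_mem _ (h ha) hb⟩
      · exact ⟨K1, hK1, TwoSidedIdeal.add_mem _ ha (h hb)⟩
    · rintro a ha
      simp only [Set.mem_iUnion] at ha ⊢
      obtain ⟨K, hK, ha⟩ := ha
      exact ⟨K, hK, TwoSidedIdeal.neg_mem _ ha⟩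
    · rintro a b hb
      simp only [Set.mem_iUnion] at hb ⊢
      obtain ⟨K, hK, hb⟩ := hb
      exact ⟨K, hK, TwoSidedIdeal.mul_mem_left _ _ _ hb⟩
    · rintro a b ha
      simp only [Set.mem_iUnion] at ha ⊢
      obtain ⟨K, hK, ha⟩ := ha
      exact ⟨K, hK, TwoSidedIdeal.mul_mem_right _ _ _ ha⟩
    · intro a ha
      rw [TwoSidedIdeal.mem_mk']
      exact Set.mem_biUnion hJ ((hcs hJ).1 ha)
    · rw [TwoSidedIdeal.mem_mk']
      simp only [Set.mem_iUnion, not_exists]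
      intro K hK hxK
      exact (hcs hK).2 hxK
    · intro K hK a ha
      rw [TwoSidedIdeal.mem_mk']
      exact Set.mem_biUnion hK ha) I hIs
  refine ⟨M, ⟨?_, ?_⟩, hMs.1, hMs.2⟩
  · intro h
    exact hMs.2 (h ▸ TwoSidedIdeal.mem_top _)
  · intro S hS hMS
    have : ∀ J ∈ S, x ∈ J := by
      intro J hJ
      by_contra hxJ
      have : J ≤ M := hmax ⟨hMs.1.trans (hS J hJ).le, hxJ⟩ (hS J hJ).le
      exact (hS J hJ).not_ge this
    exact hMs.2 (hMS ▸ (TwoSidedIdeal.mem_sInf _).mpr this)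

/-- Every proper two-sided ideal of a ring is the intersection of all the completely
irreducible two-sided ideals containing it. -/
theorem every_proper_ideal_eq_sInf_completelyIrreducible {R : Type*} [Ring R]
    (I : TwoSidedIdeal R) (hI : I ≠ ⊤) :
    I = sInf {J : TwoSidedIdeal R | J.CompletelyIrreducible ∧ I ≤ J} := by
  refine le_antisymm (le_sInf fun J hJ => hJ.2) ?_
  intro x hx
  by_contra hxI
  obtain ⟨M, hM, hIM, hxM⟩ := exists_ci I hxI
  rw [TwoSidedIdeal.mem_sInf _] at hx
  exact hxM (hx M ⟨hM, hIM⟩)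
end

section
/- Let R be a ring. Every proper two-sided ideal of R is completely irreducible if and only if every nonempty family of two-sided ideals of R contains its own intersection (i.e., for every nonempty set Y of two-sided ideals of R, the intersection of all members of Y is itself a member of Y). -/
/-- Every proper two-sided ideal of `R` is completely irreducible if and only if every nonempty
family of two-sided ideals of `R` contains its own intersection. -/
theorem all_completelyIrreducible_iff_sInf_mem {R : Type*} [Ring R] :
    (∀ I : TwoSidedIdeal R, I ≠ ⊤ → I.CompletelyIrreducible) ↔
      (∀ Y : Set (TwoSidedIdeal R), Y.Nonempty → sInf Y ∈ Y) := by
  constructor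
  · intro h Y ⟨J0, hJ0⟩
    by_cases htop : sInf Y = ⊤
    · have : J0 = ⊤ := top_le_iff.mp (htop ▸ sInf_le hJ0)
      rwa [htop, ← this]
    · by_contra hmem
      exact (h _ htop).2 Y (fun J hJ =>
        lt_of_le_of_ne (sInf_le hJ) (fun he => hmem (he ▸ hJ))) rfl
  · intro h I hI
    refine ⟨hI, fun S hS heq => ?_⟩
    rcases S.eq_empty_or_nonempty with rfl | hne
    · exact hI (heq.trans sInf_empty)
    · exact absurd (heq ▸ h S hne) (fun hm => lt_irrefl I (hS I hm))
end

section
/- Let R be a ring whose two-sided ideals are well-ordered under set inclusion, i.e., the two-sided ideals of R are totally ordered by inclusion and every nonempty set of two-sided ideals has a least element. Then every proper two-sided ideal of R is completely irreducible. -/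
/-- If the two-sided ideals of a ring `R` are well-ordered under set inclusion (totally ordered,
with every nonempty set of two-sided ideals having a least element), then every proper two-sided
ideal of `R` is completely irreducible. -/
theorem completelyIrreducible_of_wellOrdered {R : Type*} [Ring R]
    (htot : ∀ I J : TwoSidedIdeal R, I ≤ J ∨ J ≤ I)
    (hwo : ∀ Y : Set (TwoSidedIdeal R), Y.Nonempty → ∃ I ∈ Y, ∀ J ∈ Y, I ≤ J) :
    ∀ I : TwoSidedIdeal R, I ≠ ⊤ → I.CompletelyIrreducible := by
  intro I hI
  refine ⟨hI, ?_⟩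
  intro S hS hEq
  rcases S.eq_empty_or_nonempty with rfl | hne
  · simp at hEq; exact hI hEq
  · obtain ⟨J₀, hJ₀S, hmin⟩ := hwo S hne
    have h1 : J₀ ≤ sInf S := le_sInf hmin
    have h2 : sInf S ≤ J₀ := sInf_le hJ₀S
    have : I = J₀ := hEq.trans (le_antisymm h2 h1)
    exact absurd this (hS J₀ hJ₀S).ne
end
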